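/- Let $N$ be a finite set of cardinality $n$, and let $1 \le k \le n$. Suppose $\Lambda$ is a nonempty family of $r$ distinct $k$-element subsets of $N$ such that $|A \cap B| = k-1$ for all distinct $A, B \in \Lambda$. Then the cardinality of the intersection of all members of $\Lambda$ equals $k-1$ or $k-r+1$. -/

import Mathlib

/-- If `Λ` is a nonempty close family of `r` distinct `k`-element subsets of a finite
set `N` of cardinality `n` (any two distinct members meeting in exactly `k-1` elements,
`1 ≤ k ≤ n`), then the intersection of all members of `Λ` has `k-1` or `k-r+1`
elements. -/
theorem close_family_intersection {α : Type} [DecidableEq α] (n k r : ℕ)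
    (N : Finset α) (hN : N.card = n) (hk1 : 1 ≤ k) (hkn : k ≤ n)
    (Λ : Finset (Finset α)) (hΛN : ∀ A ∈ Λ, A ⊆ N) (hΛk : ∀ A ∈ Λ, A.card = k)
    (hr : Λ.card = r) (hne : Λ.Nonempty)
    (hclose : ∀ A ∈ Λ, ∀ B ∈ Λ, A ≠ B → (A ∩ B).card = k - 1) :
    (Λ.inf' hne id).card = k - 1 ∨ (Λ.inf' hne id).card = k + 1 - r := by
  classical
  -- key: if x ∈ A, x ∉ C for A, C ∈ Λ, then A \ {x} ⊆ C
  have key : ∀ A ∈ Λ, ∀ C ∈ Λ, ∀ x ∈ A, x ∉ C → A \ {x} ⊆ C := by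
    intro A hA C hC x hxA hxC
    have hne' : C ≠ A := by rintro rfl; exact hxC hxA
    have h1 : (C ∩ A).card = k - 1 := hclose C hC A hA hne'
    have h2 : C ∩ A ⊆ A \ {x} := by
      intro y hy
      simp only [Finset.mem_inter] at hy
      simp only [Finset.mem_sdiff, Finset.mem_singleton]
      exact ⟨hy.2, fun h => hxC (h ▸ hy.1)⟩
    have h3 : (A \ {x}).card = k - 1 := by
      rw [Finset.card_sdiff_of_subset (Finset.singleton_subset_iff.mpr hxA),
        Finset.card_singleton, hΛk A hA]
    have h4 : C ∩ A = A \ {x} := Finset.eq_of_subset_of_card_le h2 (by omega)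
    rw [← h4]
    exact Finset.inter_subset_left
  rcases eq_or_lt_of_le (show 1 ≤ Λ.card from Finset.one_le_card.mpr hne) with h1 | h1
  · -- r = 1
    right
    obtain ⟨A, hΛA⟩ := Finset.card_eq_one.mp h1.symm
    subst hΛA
    simp only [Finset.card_singleton] at hr
    simp only [Finset.inf'_singleton, id]
    rw [hΛk A (Finset.mem_singleton_self A)]
    omega
  · obtain ⟨A, hA, B, hB, hAB⟩ := Finset.one_lt_card.mp h1
    have hABc : (A ∩ B).card = k - 1 := hclose A hA B hB hAB
    have hUc : (A ∪ B).card = k + 1 := by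
      have := Finset.card_union_add_card_inter A B
      rw [hΛk A hA, hΛk B hB, hABc] at this
      omega
    by_cases hsub : ∀ C ∈ Λ, A ∩ B ⊆ C
    · left
      have h2 : Λ.inf' hne id = A ∩ B := by
        apply Finset.Subset.antisymm
        · exact Finset.subset_inter (Finset.inf'_le id hA) (Finset.inf'_le id hB)
        · exact Finset.le_inf' hne id hsub
      rw [h2, hABc]
    · right
      push_neg at hsub
      obtain ⟨C₀, hC₀, hC₀s⟩ := hsub
      obtain ⟨x₀, hx₀AB, hx₀C₀⟩ := Finset.not_subset.mp hC₀s
      -- any member missing a point of A ∩ B is contained in A ∪ B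
      have hmiss : ∀ C ∈ Λ, ∀ x, x ∈ A ∩ B → x ∉ C → C ⊆ A ∪ B := by
        intro C hC x hxAB hxC
        have hAx : A \ {x} ⊆ C := key A hA C hC x (Finset.mem_inter.mp hxAB).1 hxC
        have hBx : B \ {x} ⊆ C := key B hB C hC x (Finset.mem_inter.mp hxAB).2 hxC
        have hsub2 : (A ∪ B) \ {x} ⊆ C := by
          intro y hy
          simp only [Finset.mem_sdiff, Finset.mem_union, Finset.mem_singleton] at hy
          rcases hy.1 with h | h
          · exact hAx (Finset.mem_sdiff.mpr ⟨h, by simpa using hy.2⟩)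
          · exact hBx (Finset.mem_sdiff.mpr ⟨h, by simpa using hy.2⟩)
        have hxU : x ∈ A ∪ B := Finset.mem_union.mpr (Or.inl (Finset.mem_inter.mp hxAB).1)
        have hcards : ((A ∪ B) \ {x}).card = k := by
          rw [Finset.card_sdiff_of_subset (Finset.singleton_subset_iff.mpr hxU),
            Finset.card_singleton, hUc]
          omega
        have heq : (A ∪ B) \ {x} = C :=
          Finset.eq_of_subset_of_card_le hsub2 (by rw [hΛk C hC, hcards])
        rw [← heq]
        exact Finset.sdiff_subset
      have hC₀sub : C₀ ⊆ A ∪ B := hmiss C₀ hC₀ x₀ hx₀AB hx₀C₀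
      have hall : ∀ C ∈ Λ, C ⊆ A ∪ B := by
        intro C hC
        by_cases hCs : A ∩ B ⊆ C
        · have hx₀C : x₀ ∈ C := hCs hx₀AB
          have h5 : C \ {x₀} ⊆ C₀ := key C hC C₀ hC₀ x₀ hx₀C hx₀C₀
          intro y hy
          by_cases hyx : y = x₀
          · subst hyx
            exact Finset.mem_union.mpr (Or.inl (Finset.mem_inter.mp hx₀AB).1)
          · exact hC₀sub (h5 (Finset.mem_sdiff.mpr ⟨hy, by simpa using hyx⟩))
        · obtain ⟨x, hxAB, hxC⟩ := Finset.not_subset.mp hCs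
          exact hmiss C hC x hxAB hxC
      set U := A ∪ B with hU
      have hmissone : ∀ C ∈ Λ, (U \ C).card = 1 := by
        intro C hC
        rw [Finset.card_sdiff_of_subset (hall C hC), hUc, hΛk C hC]
        omega
      have hinf : Λ.inf' hne id = U \ Λ.sup (fun C => U \ C) := by
        ext y
        simp only [Finset.mem_inf', Finset.mem_sdiff, Finset.mem_sup, id]
        constructor
        · intro h
          obtain ⟨D, hD⟩ := hne
          refine ⟨hall D hD (h D hD), ?_⟩
          rintro ⟨C, hC, hyC⟩
          exact hyC.2 (h C hC)
        · rintro ⟨hyU, h⟩ C hC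
          by_contra hyC
          exact h ⟨C, hC, hyU, hyC⟩
      have hsupcard : (Λ.sup fun C => U \ C).card = r := by
        rw [Finset.sup_eq_biUnion, Finset.card_biUnion]
        · calc (∑ C ∈ Λ, (U \ C).card) = ∑ C ∈ Λ, 1 :=
              Finset.sum_congr rfl hmissone
            _ = Λ.card := by simp
            _ = r := hr
        · intro C hC D hD hCD
          by_contra hdisj
          obtain ⟨y, hyC, hyD⟩ := Finset.not_disjoint_iff.mp hdisj
          obtain ⟨a, ha⟩ := Finset.card_eq_one.mp (hmissone C hC)
          obtain ⟨b, hb⟩ := Finset.card_eq_one.mp (hmissone D hD)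
          have hab : a = b := by
            beta_reduce at hyC hyD
            rw [ha] at hyC; rw [hb] at hyD
            simp only [Finset.mem_singleton] at hyC hyD
            rw [← hyC, ← hyD]
          have hCeq : C = U \ (U \ C) := (sdiff_sdiff_eq_self (hall C hC)).symm
          have hDeq : D = U \ (U \ D) := (sdiff_sdiff_eq_self (hall D hD)).symm
          apply hCD
          rw [hCeq, hDeq, ha, hb, hab]
      have hsupsub : (Λ.sup fun C => U \ C) ⊆ U :=
        Finset.sup_le fun C _ => Finset.sdiff_subset
      rw [hinf, Finset.card_sdiff_of_subset hsupsub, hUc, hsupcard]
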